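/- Let α₀ and β be units of R, let λ = α₀^{p^s} + γβ, and suppose x^n − α₀ is basic irreducible over R. Let C = ⟨(x^n − α₀)^ν⟩ be an ideal of R[x]/⟨x^{np^s} − λ⟩, where 0 ≤ ν ≤ 2p^s. Then the RT distance of C is: 1 if 0 ≤ ν ≤ p^s; nν − np^s + 1 if p^s + 1 ≤ ν ≤ 2p^s − 1; and 0 if ν = 2p^s. -/

import Mathlib

open Polynomial

/-- The unique representative of degree `< deg q` of an element of `A[x]/⟨q⟩`
(for `q` monic). -/
noncomputable def polyRep {A : Type} [CommRing A] (q : A[X]) (c : A[X] ⧸ Ideal.span {q}) :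
    A[X] :=
  Function.surjInv Ideal.Quotient.mk_surjective c %ₘ q

open Classical in
/-- RT (Rosenbloom–Tsfasman) weight of a codeword: `1 + deg` of its representative,
and `0` for the zero codeword. -/
noncomputable def wRT {A : Type} [CommRing A] (q : A[X]) (c : A[X] ⧸ Ideal.span {q}) : ℕ :=
  if c = 0 then 0 else (polyRep q c).natDegree + 1

/-- RT distance of a code (an ideal of `A[x]/⟨q⟩`); `0` for the zero code. -/
noncomputable def dRT {A : Type} [CommRing A] (q : A[X])
    (I : Ideal (A[X] ⧸ Ideal.span {q})) : ℕ :=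
  sInf {w : ℕ | ∃ c ∈ I, c ≠ 0 ∧ w = wRT q c}


section Aux

open Polynomial

variable {A : Type} [CommRing A]

lemma mk_polyRep {q : A[X]} (hq : q.Monic) (c : A[X] ⧸ Ideal.span {q}) :
    Ideal.Quotient.mk (Ideal.span {q}) (polyRep q c) = c := by
  unfold polyRep
  rw [Polynomial.modByMonic_eq_sub_mul_div _ q, map_sub]
  rw [show (Ideal.Quotient.mk (Ideal.span {q}))
      (q * (Function.surjInv Ideal.Quotient.mk_surjective c /ₘ q)) = 0 by
    rw [Ideal.Quotient.eq_zero_iff_mem]; exact Ideal.mul_mem_right _ _ (Ideal.subset_span rfl)]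
  rw [sub_zero]; exact Function.surjInv_eq _ _

lemma polyRep_mk [Nontrivial A] {q g : A[X]} (hq : q.Monic) (hg : g.degree < q.degree) :
    polyRep q (Ideal.Quotient.mk (Ideal.span {q}) g) = g := by
  unfold polyRep
  set h := Function.surjInv Ideal.Quotient.mk_surjective
      ((Ideal.Quotient.mk (Ideal.span {q})) g) with hh
  have h1 : Ideal.Quotient.mk (Ideal.span {q}) h = Ideal.Quotient.mk (Ideal.span {q}) g :=
    Function.surjInv_eq _ _
  have h2 : q ∣ h - g := by
    rw [← Ideal.mem_span_singleton]; exact Ideal.Quotient.eq.mp h1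
  have h3 : h = g + (h - g) := by ring
  rw [h3, Polynomial.add_modByMonic, (Polynomial.modByMonic_eq_zero_iff_dvd hq).mpr h2,
    add_zero, (Polynomial.modByMonic_eq_self_iff hq).mpr hg]

lemma polyRep_degree_lt [Nontrivial A] {q : A[X]} (hq : q.Monic) (c : A[X] ⧸ Ideal.span {q}) :
    (polyRep q c).degree < q.degree := by
  unfold polyRep
  exact Polynomial.degree_modByMonic_lt _ hq

/-- For a monic `q`, `q ∣ g` with `g ≠ 0` forces `deg q ≤ deg g` (no domain needed). -/
lemma monic_dvd_degree_le [Nontrivial A] {q g : A[X]} (hq : q.Monic) (h : q ∣ g) (hg : g ≠ 0) :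
    q.degree ≤ g.degree := by
  obtain ⟨h₁, rfl⟩ := h
  have h₁ne : h₁ ≠ 0 := by rintro rfl; simp at hg
  rw [mul_comm, hq.degree_mul]
  exact le_add_of_nonneg_left (Polynomial.zero_le_degree_iff.mpr h₁ne)

lemma map_zmod_zero_dvd {p : ℕ} (g : Polynomial (Polynomial ℤ))
    (h : Polynomial.map (Polynomial.mapRingHom (Int.castRingHom (ZMod p))) g = 0) :
    (p : Polynomial (Polynomial ℤ)) ∣ g := by
  have hcast : (p : Polynomial (Polynomial ℤ)) = C (C (p : ℤ)) := by
    simp [Polynomial.C_eq_natCast]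
  rw [hcast, Polynomial.C_dvd_iff_dvd_coeff]
  intro i
  rw [Polynomial.C_dvd_iff_dvd_coeff]
  intro j
  have hi : (Polynomial.map (Polynomial.mapRingHom (Int.castRingHom (ZMod p))) g).coeff i = 0 := by
    rw [h]; simp
  rw [Polynomial.coeff_map] at hi
  have hij : ((Polynomial.mapRingHom (Int.castRingHom (ZMod p))) (g.coeff i)).coeff j = 0 := by
    rw [hi]; simp
  rw [Polynomial.coe_mapRingHom, Polynomial.coeff_map] at hij
  have := (ZMod.intCast_zmod_eq_zero_iff_dvd _ p).mp hij
  exact_mod_cast this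

lemma int_key (p s : ℕ) (hp : p.Prime) :
    ∃ W : Polynomial (Polynomial ℤ),
      (X - C X) ^ p ^ s =
        X ^ p ^ s - C X ^ p ^ s + (p : Polynomial (Polynomial ℤ)) * ((X - C X) * W) := by
  haveI : Fact p.Prime := ⟨hp⟩
  set D : Polynomial (Polynomial ℤ) := (X - C X) ^ p ^ s - X ^ p ^ s + C X ^ p ^ s with hD
  have h0 : Polynomial.map (Polynomial.mapRingHom (Int.castRingHom (ZMod p))) D = 0 := by
    rw [hD]
    push_cast [Polynomial.map_add, Polynomial.map_sub, Polynomial.map_pow, Polynomial.map_X,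
      Polynomial.map_C]
    rw [sub_pow_char_pow]
    ring
  obtain ⟨W₀, hW₀⟩ := map_zmod_zero_dvd D h0
  have hroot : (X - C (X : Polynomial ℤ)) ∣ W₀ := by
    rw [Polynomial.dvd_iff_isRoot]
    have hevalD : Polynomial.eval (X : Polynomial ℤ) D = 0 := by
      rw [hD]
      simp [zero_pow (pow_ne_zero s hp.ne_zero)]
    rw [hW₀] at hevalD
    simp only [Polynomial.eval_mul] at hevalD
    have hpne : Polynomial.eval (X : Polynomial ℤ) ((p : Polynomial (Polynomial ℤ)))
        = (p : Polynomial ℤ) := by simp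
    rw [hpne] at hevalD
    have hpz : (p : Polynomial ℤ) ≠ 0 := by
      exact_mod_cast (Nat.cast_ne_zero (R := Polynomial ℤ)).mpr hp.ne_zero
    exact (mul_eq_zero.mp hevalD).resolve_left hpz
  obtain ⟨W, hW⟩ := hroot
  refine ⟨W, ?_⟩
  have hfin : D = (p : Polynomial (Polynomial ℤ)) * ((X - C X) * W) := by rw [hW₀, hW]
  rw [hD] at hfin
  linear_combination hfin

lemma key_R {R : Type} [CommRing R] (p s n : ℕ) (hp : p.Prime) (α₀ : R) :
    ∃ W : R[X], (X ^ n - C α₀) ^ p ^ s =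
      X ^ (n * p ^ s) - C (α₀ ^ p ^ s) + C ((p : ℕ) : R) * ((X ^ n - C α₀) * W) := by
  obtain ⟨W, hW⟩ := int_key p s hp
  let ψ : Polynomial (Polynomial ℤ) →+* R[X] :=
    eval₂RingHom (eval₂RingHom (Int.castRingHom R[X]) (C α₀)) (X ^ n)
  refine ⟨ψ W, ?_⟩
  have h := congrArg ψ hW
  have hX : ψ X = X ^ n := by simp [ψ]
  have hCX : ψ (C X) = C α₀ := by simp [ψ]
  have hp' : ψ (p : Polynomial (Polynomial ℤ)) = C ((p : ℕ) : R) := by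
    rw [map_natCast]
    simp [Polynomial.C_eq_natCast]
  rw [map_pow, map_sub, hX, hCX] at h
  rw [map_add, map_sub, map_pow, map_pow, hX, hCX, map_mul, map_mul, map_sub, hX, hCX, hp'] at h
  rw [h, ← pow_mul, Polynomial.C_pow]

end Aux

set_option maxHeartbeats 2000000 in
/-- RT distances of the `(α₀^{p^s} + γβ)`-constacyclic codes
`⟨(x^n − α₀)^ν⟩` of length `np^s` over a finite chain ring with nilpotency index 2. -/
theorem stmt6 {R : Type} [CommRing R] [Finite R]
    (p m s n : ℕ) (hp : p.Prime) (hm : 0 < m) (hs : 0 < s) (hn : 0 < n)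
    (hnp : Nat.gcd n p = 1)
    (γ : R) (hγ : γ ≠ 0) (hγ2 : γ ^ 2 = 0)
    (hmax : ∀ a : R, a ∈ Ideal.span {γ} ↔ ¬ IsUnit a)
    (hres : Nat.card (R ⧸ Ideal.span {γ}) = p ^ m)
    (α₀ β : R) (hα₀ : IsUnit α₀) (hβ : IsUnit β)
    (hirr : Irreducible ((X ^ n - C α₀ : R[X]).map (Ideal.Quotient.mk (Ideal.span {γ}))))
    (ν : ℕ) (hν : ν ≤ 2 * p ^ s) :
    (ν ≤ p ^ s →
      dRT (X ^ (n * p ^ s) - C (α₀ ^ p ^ s + γ * β))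
        (Ideal.span {Ideal.Quotient.mk
          (Ideal.span {(X ^ (n * p ^ s) - C (α₀ ^ p ^ s + γ * β) : R[X])})
          ((X ^ n - C α₀) ^ ν)}) = 1) ∧
    (p ^ s + 1 ≤ ν → ν ≤ 2 * p ^ s - 1 →
      dRT (X ^ (n * p ^ s) - C (α₀ ^ p ^ s + γ * β))
        (Ideal.span {Ideal.Quotient.mk
          (Ideal.span {(X ^ (n * p ^ s) - C (α₀ ^ p ^ s + γ * β) : R[X])})
          ((X ^ n - C α₀) ^ ν)}) = n * ν - n * p ^ s + 1) ∧
    (ν = 2 * p ^ s →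
      dRT (X ^ (n * p ^ s) - C (α₀ ^ p ^ s + γ * β))
        (Ideal.span {Ideal.Quotient.mk
          (Ideal.span {(X ^ (n * p ^ s) - C (α₀ ^ p ^ s + γ * β) : R[X])})
          ((X ^ n - C α₀) ^ ν)}) = 0) := by
  haveI : Nontrivial R := nontrivial_of_ne γ 0 hγ
  haveI : Fact p.Prime := ⟨hp⟩
  have hγγ : γ * γ = 0 := by rw [← pow_two]; exact hγ2
  -- the maximal ideal
  have hImax : (Ideal.span {γ}).IsMaximal := by
    rw [Ideal.isMaximal_iff]
    constructor
    · intro h1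
      exact (hmax 1).mp h1 isUnit_one
    · intro J x _ hxI hxJ
      have hux : IsUnit x := by
        by_contra h; exact hxI ((hmax x).mpr h)
      obtain ⟨u, rfl⟩ := hux
      have : (1 : R) = ↑u⁻¹ * ↑u := by rw [Units.inv_mul]
      rw [this]
      exact J.mul_mem_left _ hxJ
  haveI := hImax
  letI : Field (R ⧸ Ideal.span {γ}) := Ideal.Quotient.field _
  haveI : Finite (R ⧸ Ideal.span {γ}) :=
    Finite.of_surjective _ Ideal.Quotient.mk_surjective
  letI : Fintype (R ⧸ Ideal.span {γ}) := Fintype.ofFinite _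
  set mkI := Ideal.Quotient.mk (Ideal.span {γ}) with hmkI
  have hpK : ((p : ℕ) : R ⧸ Ideal.span {γ}) = 0 := by
    have hcard : ((p : ℕ) : R ⧸ Ideal.span {γ}) ^ m = 0 := by
      rw [← Nat.cast_pow, ← hres, Nat.card_eq_fintype_card]
      exact Nat.cast_card_eq_zero _
    exact pow_eq_zero_iff hm.ne' |>.mp hcard
  haveI : CharP (R ⧸ Ideal.span {γ}) p := (CharP.charP_iff_prime_eq_zero hp).mpr hpK
  have hγ0 : mkI γ = 0 := Ideal.Quotient.eq_zero_iff_mem.mpr (Ideal.subset_span rfl)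
  -- γ–annihilator facts
  have hmul_ne : ∀ x : R, x ∉ Ideal.span {γ} → γ * x ≠ 0 := by
    intro x hx h0
    have hux : IsUnit x := by by_contra h; exact hx ((hmax x).mpr h)
    obtain ⟨u, rfl⟩ := hux
    apply hγ
    calc γ = γ * ↑u * ↑u⁻¹ := by rw [mul_assoc, Units.mul_inv, mul_one]
    _ = 0 := by rw [h0, zero_mul]
  have hmap0 : ∀ g : R[X], g.map mkI = 0 ↔ C γ ∣ g := by
    intro g
    rw [Polynomial.C_dvd_iff_dvd_coeff]
    constructor
    · intro h i
      have hc : (g.map mkI).coeff i = 0 := by rw [h]; simp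
      rw [Polynomial.coeff_map] at hc
      rw [← Ideal.mem_span_singleton (α := R)]
      exact Ideal.Quotient.eq_zero_iff_mem.mp hc
    · intro h
      apply Polynomial.ext; intro i
      rw [Polynomial.coeff_map, Polynomial.coeff_zero]
      exact Ideal.Quotient.eq_zero_iff_mem.mpr (Ideal.mem_span_singleton.mpr (h i))
  have hann : ∀ g : R[X], C γ * g = 0 → g.map mkI = 0 := by
    intro g hg
    apply Polynomial.ext; intro i
    have h0 : γ * g.coeff i = 0 := by
      have := congrArg (fun q => Polynomial.coeff q i) hg
      simpa [Polynomial.coeff_C_mul] using this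
    have hxI : g.coeff i ∈ Ideal.span {γ} := by
      by_contra hx
      exact hmul_ne _ hx h0
    simp [Polynomial.coeff_map, Ideal.Quotient.eq_zero_iff_mem.mpr hxI]
    exact Ideal.Quotient.eq_zero_iff_mem.mpr hxI
  -- p is a multiple of γ
  have hpRnonunit : ¬ IsUnit ((p : ℕ) : R) := by
    intro h
    have h2 : IsUnit ((p : ℕ) : R ⧸ Ideal.span {γ}) := by
      have := h.map mkI
      rwa [map_natCast] at this
    rw [hpK] at h2
    exact not_isUnit_zero h2
  obtain ⟨cc, hcc⟩ : γ ∣ ((p : ℕ) : R) := Ideal.mem_span_singleton.mp ((hmax _).mpr hpRnonunit)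
  -- basic polynomials
  set f : R[X] := X ^ n - C α₀ with hf
  set lam : R := α₀ ^ p ^ s + γ * β with hlam
  set q : R[X] := X ^ (n * p ^ s) - C lam with hq
  have hnps : 0 < n * p ^ s := Nat.mul_pos hn (pow_pos hp.pos s)
  have hfm : f.Monic := monic_X_pow_sub_C _ hn.ne'
  have hqm : q.Monic := monic_X_pow_sub_C _ hnps.ne'
  have hqdeg : q.degree = ((n * p ^ s : ℕ) : WithBot ℕ) := degree_X_pow_sub_C hnps _
  have hfnat : f.natDegree = n := natDegree_X_pow_sub_C
  have hfbarm : (f.map mkI).Monic := hfm.map mkI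
  have hqbar : q.map mkI = (f.map mkI) ^ p ^ s := by
    have h1 : mkI (γ * β) = 0 := by rw [map_mul, hγ0, zero_mul]
    have hlam' : mkI lam = (mkI α₀) ^ p ^ s := by
      rw [hlam, map_add, map_pow, h1, add_zero]
    rw [hq, hf, Polynomial.map_sub, Polynomial.map_pow, Polynomial.map_X, Polynomial.map_C,
      Polynomial.map_sub, Polynomial.map_pow, Polynomial.map_X, Polynomial.map_C,
      sub_pow_char_pow, ← pow_mul, hlam', map_pow]
  -- the key decomposition f^{p^s} = q + C γ * V
  obtain ⟨W, hW⟩ := key_R p s n hp α₀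
  set V : R[X] := C β + C cc * (f * W) with hV
  have hV1 : f ^ p ^ s = q + C γ * V := by
    rw [hW, hcc, hq, hlam, hV, Polynomial.C_add, Polynomial.C_mul, Polynomial.C_mul]
    ring
  -- V is a unit modulo ⟨q⟩
  set mq := Ideal.Quotient.mk (Ideal.span {q}) with hmq
  have hq0 : mq q = 0 := Ideal.Quotient.eq_zero_iff_mem.mpr (Ideal.subset_span rfl)
  have hfbar_ndvd : ¬ (f.map mkI ∣ V.map mkI) := by
    intro hdvd
    have hVbar : V.map mkI = C (mkI β) + C (mkI cc) * (f.map mkI * W.map mkI) := by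
      rw [hV, Polynomial.map_add, Polynomial.map_mul, Polynomial.map_mul,
        Polynomial.map_C, Polynomial.map_C]
    have hdvd' : f.map mkI ∣ C (mkI β) := by
      have heq : C (mkI β) = V.map mkI - C (mkI cc) * (f.map mkI * W.map mkI) := by
        rw [hVbar]; ring
      rw [heq]
      exact dvd_sub hdvd ⟨C (mkI cc) * W.map mkI, by ring⟩
    have hβ0 : mkI β ≠ 0 := (hβ.map mkI).ne_zero
    have hCβ : (C (mkI β) : Polynomial (R ⧸ Ideal.span {γ})) ≠ 0 := by
      simpa using hβ0
    have hd := Polynomial.degree_le_of_dvd hdvd' hCβ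
    rw [Polynomial.degree_C hβ0, hf, Polynomial.map_sub, Polynomial.map_pow,
      Polynomial.map_X, Polynomial.map_C, degree_X_pow_sub_C hn] at hd
    exact absurd hd (by exact_mod_cast Nat.not_le.mpr hn)
  have hcop : IsCoprime (q.map mkI) (V.map mkI) := by
    rw [hqbar]
    exact (hirr.coprime_iff_not_dvd.mpr hfbar_ndvd).pow_left
  obtain ⟨a, b, hab⟩ := hcop
  obtain ⟨a₀, ha₀⟩ := Polynomial.map_surjective mkI Ideal.Quotient.mk_surjective a
  obtain ⟨b₀, hb₀⟩ := Polynomial.map_surjective mkI Ideal.Quotient.mk_surjective b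
  have h1map : (a₀ * q + b₀ * V - 1).map mkI = 0 := by
    rw [Polynomial.map_sub, Polynomial.map_add, Polynomial.map_mul, Polynomial.map_mul,
      ha₀, hb₀, Polynomial.map_one]
    linear_combination hab
  obtain ⟨E, hE⟩ := (hmap0 _).mp h1map
  have hγsq : mq (C γ) * mq (C γ) = 0 := by
    rw [← map_mul, ← Polynomial.C_mul, hγγ, Polynomial.C_0, map_zero]
  have hVunit : IsUnit (mq V) := by
    apply IsUnit.of_mul_eq_one (mq b₀ * (1 - mq (C γ) * mq E))
    have hbV : mq b₀ * mq V = 1 + mq (C γ) * mq E := by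
      have heq : b₀ * V = 1 + C γ * E - a₀ * q := by linear_combination hE
      calc mq b₀ * mq V = mq (b₀ * V) := by rw [map_mul]
      _ = mq (1 + C γ * E - a₀ * q) := by rw [heq]
      _ = 1 + mq (C γ) * mq E - mq a₀ * mq q := by
            rw [map_sub, map_add, map_one, map_mul, map_mul]
      _ = 1 + mq (C γ) * mq E := by rw [hq0, mul_zero, sub_zero]
    calc mq V * (mq b₀ * (1 - mq (C γ) * mq E))
        = (mq b₀ * mq V) * (1 - mq (C γ) * mq E) := by ring
    _ = (1 + mq (C γ) * mq E) * (1 - mq (C γ) * mq E) := by rw [hbV]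
    _ = 1 - (mq (C γ) * mq (C γ)) * (mq E * mq E) := by ring
    _ = 1 := by rw [hγsq, zero_mul, sub_zero]
  obtain ⟨u, hu⟩ := hVunit
  have hfq : mq (f ^ p ^ s) = mq (C γ) * mq V := by
    rw [hV1, map_add, hq0, zero_add, map_mul]
  have hγq_ne : mq (C γ) ≠ 0 := by
    intro h0
    have hdvd : q ∣ C γ := Ideal.mem_span_singleton.mp (Ideal.Quotient.eq_zero_iff_mem.mp h0)
    have hCγ0 : (C γ : R[X]) ≠ 0 := by simpa using hγ
    have hd := monic_dvd_degree_le hqm hdvd hCγ0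
    rw [hqdeg, Polynomial.degree_C hγ] at hd
    exact absurd hd (by exact_mod_cast Nat.not_le.mpr hnps)
  refine ⟨?_, ?_, ?_⟩
  -- CASE 1 : ν ≤ p^s
  · intro hcase
    simp only [dRT]
    have hmem : mq (C γ) ∈ Ideal.span {mq (f ^ ν)} := by
      rw [Ideal.mem_span_singleton]
      refine ⟨mq (f ^ (p ^ s - ν)) * ↑u⁻¹, ?_⟩
      have h2 : mq (f ^ ν) * mq (f ^ (p ^ s - ν)) = mq (C γ) * ↑u := by
        rw [← map_mul, ← pow_add, Nat.add_sub_cancel' hcase, hfq, hu]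
      calc mq (C γ) = mq (C γ) * (↑u * ↑u⁻¹) := by rw [Units.mul_inv, mul_one]
      _ = (mq (C γ) * ↑u) * ↑u⁻¹ := by ring
      _ = (mq (f ^ ν) * mq (f ^ (p ^ s - ν))) * ↑u⁻¹ := by rw [h2]
      _ = mq (f ^ ν) * (mq (f ^ (p ^ s - ν)) * ↑u⁻¹) := by ring
    have hw1 : wRT q (mq (C γ)) = 1 := by
      rw [wRT, if_neg hγq_ne, hmq, polyRep_mk hqm (by
        rw [Polynomial.degree_C hγ, hqdeg]
        exact_mod_cast hnps), Polynomial.natDegree_C]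
    have h1T : (1 : ℕ) ∈ {w : ℕ | ∃ c ∈ Ideal.span {mq (f ^ ν)}, c ≠ 0 ∧ w = wRT q c} :=
      ⟨mq (C γ), hmem, hγq_ne, hw1.symm⟩
    refine le_antisymm (Nat.sInf_le h1T) ?_
    obtain ⟨c, _, hc0, hcw⟩ := Nat.sInf_mem ⟨1, h1T⟩
    rw [hcw, wRT, if_neg hc0]
    omega
  -- CASE 2 : p^s + 1 ≤ ν ≤ 2 p^s - 1
  · intro hc1 hc2
    simp only [dRT]
    have hps2 : 2 ≤ p ^ s := Nat.one_lt_pow hs.ne' hp.one_lt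
    set t := ν - p ^ s with ht
    have hνt : ν = p ^ s + t := by omega
    have htlt : t < p ^ s := by omega
    have hval : n * ν - n * p ^ s = n * t := by
      rw [hνt, Nat.mul_add]; omega
    rw [hval]
    set g₀ : R[X] := C γ * f ^ t with hg₀
    have hftnat : (f ^ t).natDegree = t * n := by rw [hfm.natDegree_pow, hfnat]
    have hg₀coeff : g₀.coeff (t * n) = γ := by
      rw [hg₀, Polynomial.coeff_C_mul, ← hftnat, (hfm.pow t).coeff_natDegree, mul_one]
    have hg₀ne : g₀ ≠ 0 := by
      intro h0
      apply hγ
      rw [← hg₀coeff, h0, Polynomial.coeff_zero]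
    have hg₀nat : g₀.natDegree = t * n := by
      refine le_antisymm ?_ (Polynomial.le_natDegree_of_ne_zero (by rw [hg₀coeff]; exact hγ))
      calc g₀.natDegree ≤ (C γ).natDegree + (f ^ t).natDegree := Polynomial.natDegree_mul_le
      _ = t * n := by rw [Polynomial.natDegree_C, hftnat, zero_add]
    have hg₀deg_lt : g₀.degree < q.degree := by
      refine lt_of_le_of_lt Polynomial.degree_le_natDegree ?_
      rw [hg₀nat, hqdeg]
      exact_mod_cast (by calc t * n = n * t := mul_comm _ _
        _ < n * p ^ s := mul_lt_mul_of_pos_left htlt hn)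
    have hmqg₀ : mq g₀ = mq (f ^ ν) * ↑u⁻¹ := by
      have h2 : mq (f ^ ν) = mq g₀ * ↑u := by
        rw [hνt, pow_add, map_mul, hfq, hu, hg₀, map_mul]
        ring
      rw [h2, mul_assoc, Units.mul_inv, mul_one]
    have hmqg₀ne : mq g₀ ≠ 0 := by
      intro h0
      have hdvd : q ∣ g₀ := Ideal.mem_span_singleton.mp (Ideal.Quotient.eq_zero_iff_mem.mp h0)
      exact absurd (monic_dvd_degree_le hqm hdvd hg₀ne) (not_le.mpr hg₀deg_lt)
    have hwg₀ : wRT q (mq g₀) = n * t + 1 := by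
      rw [wRT, if_neg hmqg₀ne, hmq, polyRep_mk hqm hg₀deg_lt, hg₀nat, mul_comm t n]
    have hmemT : (n * t + 1 : ℕ) ∈
        {w : ℕ | ∃ c ∈ Ideal.span {mq (f ^ ν)}, c ≠ 0 ∧ w = wRT q c} :=
      ⟨mq g₀, Ideal.mem_span_singleton.mpr ⟨↑u⁻¹, hmqg₀⟩, hmqg₀ne, hwg₀.symm⟩
    -- lower bound
    have hlow : ∀ w ∈ {w : ℕ | ∃ c ∈ Ideal.span {mq (f ^ ν)}, c ≠ 0 ∧ w = wRT q c},
        n * t + 1 ≤ w := by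
      rintro w ⟨c, hc, hc0, rfl⟩
      rw [wRT, if_neg hc0]
      suffices hsuf : n * t ≤ (polyRep q c).natDegree by omega
      set r := polyRep q c with hr
      have hrmk : mq r = c := by rw [hr, hmq]; exact mk_polyRep hqm c
      have hrdeg : r.degree < q.degree := by rw [hr]; exact polyRep_degree_lt hqm c
      have hrne : r ≠ 0 := by
        intro h0; apply hc0; rw [← hrmk, h0, map_zero]
      obtain ⟨z, hz⟩ := Ideal.mem_span_singleton.mp hc
      obtain ⟨g, rfl⟩ := Ideal.Quotient.mk_surjective z
      have hrg : mq r = mq (f ^ ν * g) := by rw [hrmk, hz, map_mul]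
      obtain ⟨w₁, hw₁⟩ : q ∣ r - f ^ ν * g :=
        Ideal.mem_span_singleton.mp (Ideal.Quotient.eq.mp hrg)
      have hr_eq : r = f ^ ν * g + q * w₁ := by linear_combination hw₁
      have hrbar0 : r.map mkI = 0 := by
        by_contra hne
        have hdvd : q.map mkI ∣ r.map mkI := by
          rw [hr_eq, Polynomial.map_add, Polynomial.map_mul, Polynomial.map_mul,
            Polynomial.map_pow, hqbar]
          refine dvd_add ?_ (Dvd.intro _ rfl)
          refine Dvd.dvd.mul_right ?_ _
          exact pow_dvd_pow _ (by omega)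
        have hd1 := Polynomial.degree_le_of_dvd hdvd hne
        have hd2 : (r.map mkI).degree ≤ r.degree := Polynomial.degree_map_le
        have hd3 : (q.map mkI).degree = q.degree := hqm.degree_map mkI
        rw [hd3] at hd1
        exact absurd (lt_of_le_of_lt (hd1.trans hd2) hrdeg) (lt_irrefl _)
      obtain ⟨r₁, hr₁⟩ := (hmap0 r).mp hrbar0
      have e2 : f ^ ν = (q + C γ * V) * f ^ t := by
        rw [← hV1, ← pow_add, ← hνt]
      have e1 : C γ * r₁ = f ^ ν * g + q * w₁ := by rw [← hr₁]; exact hr_eq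
      have hkey2 : C γ * (r₁ - V * (f ^ t * g)) = q * (f ^ t * g + w₁) := by
        linear_combination e1 + g * e2
      have hw2bar : (f ^ t * g + w₁).map mkI = 0 := by
        have h0 : (C γ * (r₁ - V * (f ^ t * g))).map mkI = 0 := by
          rw [Polynomial.map_mul, Polynomial.map_C, hγ0, Polynomial.C_0, zero_mul]
        rw [hkey2, Polynomial.map_mul] at h0
        exact (mul_eq_zero.mp h0).resolve_left (hqm.map mkI).ne_zero
      obtain ⟨w₃, hw₃⟩ := (hmap0 _).mp hw2bar
      have hkey3 : C γ * (r₁ - V * (f ^ t * g) - q * w₃) = 0 := by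
        have hCγγ : C γ * C γ = (0 : R[X]) := by rw [← Polynomial.C_mul, hγγ, Polynomial.C_0]
        linear_combination hkey2 + q * hw₃
      have hbar1 := hann _ hkey3
      have hr₁eq : r₁.map mkI = (V * (f ^ t * g) + q * w₃).map mkI := by
        rw [Polynomial.map_sub, Polynomial.map_sub, sub_sub, sub_eq_zero] at hbar1
        rw [hbar1, Polynomial.map_add]
      have hdvd_t : (f.map mkI) ^ t ∣ r₁.map mkI := by
        rw [hr₁eq, Polynomial.map_add, Polynomial.map_mul, Polynomial.map_mul,
          Polynomial.map_mul, Polynomial.map_pow, hqbar]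
        refine dvd_add ⟨V.map mkI * g.map mkI, by ring⟩ ?_
        exact Dvd.dvd.mul_right (pow_dvd_pow _ htlt.le) _
      have hr₁bar_ne : r₁.map mkI ≠ 0 := by
        intro h0
        obtain ⟨r₄, hr₄⟩ := (hmap0 _).mp h0
        apply hrne
        rw [hr₁, hr₄, ← mul_assoc, ← Polynomial.C_mul, hγγ, Polynomial.C_0, zero_mul]
      have hd := Polynomial.degree_le_of_dvd hdvd_t hr₁bar_ne
      set d := (r₁.map mkI).natDegree with hd'
      have hnt_le_d : n * t ≤ d := by
        have hdegft : ((f.map mkI) ^ t).degree = ((t * n : ℕ) : WithBot ℕ) := by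
          rw [Polynomial.degree_eq_natDegree (hfbarm.pow t).ne_zero, hfbarm.natDegree_pow,
            hfm.natDegree_map mkI, hfnat]
        rw [hdegft, Polynomial.degree_eq_natDegree hr₁bar_ne] at hd
        have hle : t * n ≤ d := by exact_mod_cast hd
        exact le_of_eq_of_le (mul_comm n t) hle
      have hcoeffd : mkI (r₁.coeff d) ≠ 0 := by
        have hlc : (r₁.map mkI).coeff d ≠ 0 :=
          fun h0 => hr₁bar_ne (Polynomial.leadingCoeff_eq_zero.mp h0)
        rwa [Polynomial.coeff_map] at hlc
      have hrd : r.coeff d ≠ 0 := by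
        rw [hr₁, Polynomial.coeff_C_mul]
        have hxnotI : r₁.coeff d ∉ Ideal.span {γ} :=
          fun hm => hcoeffd (Ideal.Quotient.eq_zero_iff_mem.mpr hm)
        exact hmul_ne _ hxnotI
      have hfin : d ≤ r.natDegree := Polynomial.le_natDegree_of_ne_zero hrd
      omega
    refine le_antisymm (Nat.sInf_le hmemT) ?_
    exact hlow _ (Nat.sInf_mem ⟨_, hmemT⟩)
  -- CASE 3 : ν = 2 p^s
  · intro hcase
    simp only [dRT]
    have hzero : mq (f ^ ν) = 0 := by
      rw [hcase, two_mul, pow_add, map_mul, hfq]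
      calc mq (C γ) * mq V * (mq (C γ) * mq V)
          = (mq (C γ) * mq (C γ)) * (mq V * mq V) := by ring
      _ = 0 := by rw [hγsq, zero_mul]
    have hTe : {w : ℕ | ∃ c ∈ Ideal.span {mq (f ^ ν)}, c ≠ 0 ∧ w = wRT q c} = ∅ := by
      ext w
      simp only [Set.mem_setOf_eq, Set.mem_empty_iff_false, iff_false, not_exists]
      rintro c ⟨hc, hc0, -⟩
      rw [hzero] at hc
      exact hc0 (by simpa using Ideal.mem_span_singleton.mp hc)
    rw [hTe, Nat.sInf_empty]
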